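/- Let U, W ∈ B(H) with W invertible and U unitary, and define C^{(n)}_{U,W} := (1/2)(T_{U,W}^n + S_{U,W}^n) on B_0(H). Suppose for each m ∈ ℕ there exist sequences {E_k}, {R_k} of subspaces of L_m with L_m = E_k ⊕ R_k (orthogonal direct sum inside L_m) and a strictly increasing sequence {n_k} ⊆ ℕ such that ‖W^{n_k} P_m‖ → 0, ‖W^{−n_k} P_m‖ → 0, ‖W^{2 n_k} P_{E_k}‖ → 0, and ‖W^{−2 n_k} P_{R_k}‖ → 0 as k → ∞. Then the sequence (C^{(n)}_{U,W})_{n∈ℕ} is topologically transitive on B_0(H): for any nonempty open O_1, O_2 ⊆ B_0(H) there is k with C^{(n_k)}_{U,W}(O_1) ∩ O_2 ≠ ∅. -/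

import Mathlib

set_option linter.unusedSectionVars false
set_option linter.unusedVariables false

open scoped InnerProductSpace
open Filter

noncomputable section

variable {H : Type*} [NormedAddCommGroup H] [InnerProductSpace ℂ H] [CompleteSpace H]

/-- `m(F) := inf_{‖x‖=1} ‖F x‖`. -/
def mop (F : H →L[ℂ] H) : ℝ := ⨅ x : {x : H // ‖x‖ = 1}, ‖F x‖

/-- The orthogonal projection onto a finite-dimensional subspace, as an endomorphism of `H`. -/
def projCLM (K : Submodule ℂ H) (hK : FiniteDimensional ℂ K) : H →L[ℂ] H :=
  letI := hK
  letI : CompleteSpace K := FiniteDimensional.complete ℂ K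
  K.subtypeL ∘L K.orthogonalProjectionOnto

/-- `L_m`, the span of the first `m` basis vectors. -/
def Lspan (b : HilbertBasis ℕ ℂ H) (m : ℕ) : Submodule ℂ H :=
  Submodule.span ℂ (b '' Set.Iio m)

theorem Lspan_fd (b : HilbertBasis ℕ ℂ H) (m : ℕ) : FiniteDimensional ℂ (Lspan b m) :=
  FiniteDimensional.span_of_finite ℂ ((Set.finite_Iio m).image b)

/-- `P_m`, the orthogonal projection onto `L_m`. -/
def Pproj (b : HilbertBasis ℕ ℂ H) (m : ℕ) : H →L[ℂ] H := projCLM (Lspan b m) (Lspan_fd b m)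

/-- `T_{U,W}^n (F) = W^n F U^n`. -/
def Tpow (W : H ≃L[ℂ] H) (U : H →L[ℂ] H) (n : ℕ) (F : H →L[ℂ] H) : H →L[ℂ] H :=
  ((W : H →L[ℂ] H) ^ n) ∘L F ∘L (U ^ n)

/-- `S_{U,W}^n (F) = W^{-n} F U^{-n}` (here `U⁻¹ = star U` since `U` is unitary). -/
def Spow (W : H ≃L[ℂ] H) (U : H →L[ℂ] H) (n : ℕ) (F : H →L[ℂ] H) : H →L[ℂ] H :=
  ((W.symm : H →L[ℂ] H) ^ n) ∘L F ∘L ((star U) ^ n)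

/-- The cosine operator function `C^{(n)} = (1/2)(T^n + S^n)`. -/
def Cpow (W : H ≃L[ℂ] H) (U : H →L[ℂ] H) (n : ℕ) (F : H →L[ℂ] H) : H →L[ℂ] H :=
  (2 : ℂ)⁻¹ • (Tpow W U n F + Spow W U n F)

/-- `B₀(H)`, the compact operators on `H`, as a submodule of `B(H)`. -/
def B0 : Submodule ℂ (H →L[ℂ] H) := compactOperator (RingHom.id ℂ) H H

theorem Tpow_mem (W : H ≃L[ℂ] H) (U : H →L[ℂ] H) (n : ℕ) (F : H →L[ℂ] H)
    (hF : IsCompactOperator F) : Tpow W U n F ∈ B0 (H := H) :=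
  (hF.comp_clm (U ^ n)).clm_comp ((W : H →L[ℂ] H) ^ n)

theorem Spow_mem (W : H ≃L[ℂ] H) (U : H →L[ℂ] H) (n : ℕ) (F : H →L[ℂ] H)
    (hF : IsCompactOperator F) : Spow W U n F ∈ B0 (H := H) :=
  (hF.comp_clm ((star U) ^ n)).clm_comp ((W.symm : H →L[ℂ] H) ^ n)

theorem Cpow_mem (W : H ≃L[ℂ] H) (U : H →L[ℂ] H) (n : ℕ) (F : H →L[ℂ] H)
    (hF : IsCompactOperator F) : Cpow W U n F ∈ B0 (H := H) :=
  Submodule.smul_mem _ _ (Submodule.add_mem _ (Tpow_mem W U n F hF) (Spow_mem W U n F hF))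

/-- `T^n` as a map of `B₀(H)`. -/
def TB0 (W : H ≃L[ℂ] H) (U : H →L[ℂ] H) (n : ℕ) (F : B0 (H := H)) : B0 (H := H) :=
  ⟨Tpow W U n F.1, Tpow_mem W U n F.1 F.2⟩

/-- `C^{(n)}` as a map of `B₀(H)`. -/
def CB0 (W : H ≃L[ℂ] H) (U : H →L[ℂ] H) (n : ℕ) (F : B0 (H := H)) : B0 (H := H) :=
  ⟨Cpow W U n F.1, Cpow_mem W U n F.1 F.2⟩

/-- The absolute value `|G| = sqrt(G* G)` of an operator. -/
def absop (G : H →L[ℂ] H) : H →L[ℂ] H := CFC.sqrt (star G * G)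

/-- The trace computed in the orthonormal basis `b`. -/
def trB (b : HilbertBasis ℕ ℂ H) (A : H →L[ℂ] H) : ℂ := ∑' j, ⟪b j, A (b j)⟫_ℂ

/-- `G` is trace class (w.r.t. the basis `b`): the trace of `|G|` converges. -/
def IsTraceClassB (b : HilbertBasis ℕ ℂ H) (G : H →L[ℂ] H) : Prop :=
  Summable fun j => ⟪b j, absop G (b j)⟫_ℂ

/-- The trace norm `‖G‖₁ = tr |G|` computed in the basis `b`. -/
def traceNormB (b : HilbertBasis ℕ ℂ H) (G : H →L[ℂ] H) : ℝ :=
  ∑' j, (⟪b j, absop G (b j)⟫_ℂ).re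

/-- `L_n` for a basis indexed by positive integers. -/
def LspanP (b : HilbertBasis ℕ+ ℂ H) (n : ℕ) : Submodule ℂ H :=
  Submodule.span ℂ (b '' {j : ℕ+ | (j : ℕ) ≤ n})

theorem LspanP_fd (b : HilbertBasis ℕ+ ℂ H) (n : ℕ) : FiniteDimensional ℂ (LspanP b n) := by
  refine FiniteDimensional.span_of_finite ℂ (Set.Finite.image b ?_)
  have : {j : ℕ+ | (j : ℕ) ≤ n} = ((↑) : ℕ+ → ℕ) ⁻¹' Set.Iic n := rfl
  rw [this]
  exact (Set.finite_Iic n).preimage (Set.injOn_of_injective PNat.coe_injective)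

/-- `P_n` for a basis indexed by positive integers. -/
def PprojP (b : HilbertBasis ℕ+ ℂ H) (n : ℕ) : H →L[ℂ] H := projCLM (LspanP b n) (LspanP_fd b n)


set_option maxHeartbeats 1000000

-- ===== auxiliary lemmas =====
section AuxLemmas

theorem projCLM_apply (K : Submodule ℂ H) (hK : FiniteDimensional ℂ K) (x : H) :
    haveI := hK
    haveI : CompleteSpace K := FiniteDimensional.complete ℂ K
    projCLM K hK x = (K.orthogonalProjectionOnto x : H) := rfl

theorem projCLM_mem (K : Submodule ℂ H) (hK : FiniteDimensional ℂ K) (x : H) :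
    projCLM K hK x ∈ K := by
  haveI := hK
  haveI : CompleteSpace K := FiniteDimensional.complete ℂ K
  rw [projCLM_apply]
  exact (K.orthogonalProjectionOnto x).2

theorem projCLM_eq_self (K : Submodule ℂ H) (hK : FiniteDimensional ℂ K) {x : H} (hx : x ∈ K) :
    projCLM K hK x = x := by
  haveI := hK
  haveI : CompleteSpace K := FiniteDimensional.complete ℂ K
  rw [projCLM_apply]
  exact congrArg Subtype.val (Submodule.orthogonalProjectionOnto_mem_subspace_eq_self (⟨x, hx⟩ : K))

theorem norm_projCLM_apply_le (K : Submodule ℂ H) (hK : FiniteDimensional ℂ K) (x : H) :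
    ‖projCLM K hK x‖ ≤ ‖x‖ := by
  haveI := hK
  haveI : CompleteSpace K := FiniteDimensional.complete ℂ K
  rw [projCLM_apply]
  calc ‖(K.orthogonalProjectionOnto x : H)‖ = ‖K.orthogonalProjectionOnto x‖ := rfl
    _ ≤ ‖K.orthogonalProjectionOnto‖ * ‖x‖ := (K.orthogonalProjectionOnto).le_opNorm x
    _ ≤ 1 * ‖x‖ := by
        gcongr
        exact Submodule.orthogonalProjectionOnto_norm_le K
    _ = ‖x‖ := one_mul _

theorem norm_projCLM_le (K : Submodule ℂ H) (hK : FiniteDimensional ℂ K) :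
    ‖projCLM K hK‖ ≤ 1 :=
  ContinuousLinearMap.opNorm_le_bound _ one_pos.le fun x => by
    rw [one_mul]; exact norm_projCLM_apply_le K hK x

theorem norm_sub_projCLM_le (K : Submodule ℂ H) (hK : FiniteDimensional ℂ K) (x : H)
    {v : H} (hv : v ∈ K) : ‖x - projCLM K hK x‖ ≤ ‖x - v‖ := by
  haveI := hK
  haveI : CompleteSpace K := FiniteDimensional.complete ℂ K
  rw [projCLM_apply, ← Submodule.starProjection_apply, Submodule.starProjection_minimal]
  exact ciInf_le ⟨0, fun c hc => by obtain ⟨w, rfl⟩ := hc; positivity⟩ (⟨v, hv⟩ : K)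

theorem norm_sub_projCLM_le_self (K : Submodule ℂ H) (hK : FiniteDimensional ℂ K) (x : H) :
    ‖x - projCLM K hK x‖ ≤ ‖x‖ := by
  simpa using norm_sub_projCLM_le K hK x K.zero_mem

theorem projCLM_comp_projCLM {K L : Submodule ℂ H} (hK : FiniteDimensional ℂ K)
    (hL : FiniteDimensional ℂ L) (hKL : K ≤ L) :
    projCLM L hL ∘L projCLM K hK = projCLM K hK := by
  ext x
  exact projCLM_eq_self L hL (hKL (projCLM_mem K hK x))

theorem projCLM_add_projCLM {E R L : Submodule ℂ H} (hE : FiniteDimensional ℂ E)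
    (hR : FiniteDimensional ℂ R) (hL : FiniteDimensional ℂ L) (hsup : E ⊔ R = L)
    (horth : ∀ x ∈ E, ∀ y ∈ R, ⟪x, y⟫_ℂ = 0) :
    projCLM E hE + projCLM R hR = projCLM L hL := by
  haveI := hE; haveI := hR; haveI := hL
  haveI : CompleteSpace E := FiniteDimensional.complete ℂ E
  haveI : CompleteSpace R := FiniteDimensional.complete ℂ R
  haveI : CompleteSpace L := FiniteDimensional.complete ℂ L
  have hEL : E ≤ L := hsup ▸ le_sup_left
  have hRL : R ≤ L := hsup ▸ le_sup_right
  ext x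
  rw [ContinuousLinearMap.add_apply, projCLM_apply, projCLM_apply, projCLM_apply]
  refine (Submodule.eq_starProjection_of_mem_of_inner_eq_zero ?_ ?_).symm
  · exact L.add_mem (hEL (E.orthogonalProjectionOnto x).2) (hRL (R.orthogonalProjectionOnto x).2)
  · intro w hw
    rw [← hsup, Submodule.mem_sup] at hw
    obtain ⟨e, he, r, hr, rfl⟩ := hw
    have h1 : ⟪x - E.orthogonalProjectionOnto x, e⟫_ℂ = 0 :=
      Submodule.starProjection_inner_eq_zero (K := E) x e he
    have h2 : ⟪x - R.orthogonalProjectionOnto x, r⟫_ℂ = 0 :=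
      Submodule.starProjection_inner_eq_zero (K := R) x r hr
    have h3 : ⟪(R.orthogonalProjectionOnto x : H), e⟫_ℂ = 0 := by
      rw [inner_eq_zero_symm]
      exact horth e he _ (R.orthogonalProjectionOnto x).2
    have h4 : ⟪(E.orthogonalProjectionOnto x : H), r⟫_ℂ = 0 :=
      horth _ (E.orthogonalProjectionOnto x).2 r hr
    have key : x - ((E.orthogonalProjectionOnto x : H) + (R.orthogonalProjectionOnto x : H))
        = (x - E.orthogonalProjectionOnto x) - R.orthogonalProjectionOnto x := by abel
    simp only [inner_sub_left] at h1 h2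
    rw [key]
    simp only [inner_add_right, inner_sub_left]
    linear_combination h1 + h2 - h3 - h4

theorem unitary_pow_mem' {U : H →L[ℂ] H} (hU : U ∈ unitary (H →L[ℂ] H)) (j : ℕ) :
    U ^ j ∈ unitary (H →L[ℂ] H) := pow_mem hU j

theorem norm_unitary_pow_le {U : H →L[ℂ] H} (hU : U ∈ unitary (H →L[ℂ] H)) (j : ℕ) :
    ‖U ^ j‖ ≤ 1 :=
  ContinuousLinearMap.opNorm_le_bound _ zero_le_one fun x => by
    rw [one_mul, ContinuousLinearMap.norm_map_of_mem_unitary (unitary_pow_mem' hU j)]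

theorem star_pow_mul_pow {U : H →L[ℂ] H} (hU : U ∈ unitary (H →L[ℂ] H)) (j : ℕ) :
    (star U) ^ j * U ^ j = 1 := by
  rw [← star_pow]
  exact (Unitary.mem_iff.mp (unitary_pow_mem' hU j)).1

theorem pow_mul_star_pow {U : H →L[ℂ] H} (hU : U ∈ unitary (H →L[ℂ] H)) (j : ℕ) :
    U ^ j * (star U) ^ j = 1 := by
  rw [← star_pow]
  exact (Unitary.mem_iff.mp (unitary_pow_mem' hU j)).2

theorem norm_star_pow_le {U : H →L[ℂ] H} (hU : U ∈ unitary (H →L[ℂ] H)) (j : ℕ) :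
    ‖(star U) ^ j‖ ≤ 1 := by
  rw [← star_pow]
  exact ContinuousLinearMap.opNorm_le_bound _ zero_le_one fun x => by
    rw [one_mul, ContinuousLinearMap.norm_map_of_mem_unitary
      (Unitary.star_mem (unitary_pow_mem' hU j))]

theorem symm_mul_self (W : H ≃L[ℂ] H) :
    ((W.symm : H →L[ℂ] H)) * (W : H →L[ℂ] H) = 1 := by
  ext x; simp [ContinuousLinearMap.mul_apply]

theorem self_mul_symm (W : H ≃L[ℂ] H) :
    ((W : H →L[ℂ] H)) * (W.symm : H →L[ℂ] H) = 1 := by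
  ext x; simp [ContinuousLinearMap.mul_apply]

theorem commute_symm_self (W : H ≃L[ℂ] H) :
    Commute ((W.symm : H →L[ℂ] H)) (W : H →L[ℂ] H) := by
  unfold Commute SemiconjBy
  rw [symm_mul_self, self_mul_symm]

theorem symm_pow_mul_pow (W : H ≃L[ℂ] H) (j : ℕ) :
    ((W.symm : H →L[ℂ] H)) ^ j * (W : H →L[ℂ] H) ^ j = 1 := by
  rw [← (commute_symm_self W).mul_pow, symm_mul_self, one_pow]

theorem pow_mul_symm_pow (W : H ≃L[ℂ] H) (j : ℕ) :
    ((W : H →L[ℂ] H)) ^ j * (W.symm : H →L[ℂ] H) ^ j = 1 := by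
  rw [← ((commute_symm_self W).symm).mul_pow, self_mul_symm, one_pow]

theorem tendsto_norm_sub_Pproj (b : HilbertBasis ℕ ℂ H) (y : H) :
    Tendsto (fun m => ‖y - Pproj b m y‖) atTop (nhds 0) := by
  have hsum := (b.hasSum_repr y).tendsto_sum_nat
  have h0 : Tendsto (fun m => ‖y - ∑ i ∈ Finset.range m, b.repr y i • b i‖) atTop (nhds 0) := by
    have := tendsto_iff_norm_sub_tendsto_zero.mp hsum
    simpa [norm_sub_rev] using this
  refine squeeze_zero (fun m => norm_nonneg _) (fun m => norm_sub_projCLM_le _ _ y ?_) h0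
  exact Submodule.sum_mem _ fun i hi => Submodule.smul_mem _ _
    (Submodule.subset_span ⟨i, Finset.mem_range.mp hi, rfl⟩)

theorem tendsto_comp_Pproj (b : HilbertBasis ℕ ℂ H) (F : H →L[ℂ] H)
    (hF : IsCompactOperator F) :
    Tendsto (fun m => ‖F - Pproj b m ∘L F‖) atTop (nhds 0) := by
  refine Metric.tendsto_atTop.2 fun ε hε => ?_
  obtain ⟨K, hKc, hKim⟩ :=
    IsCompactOperator.image_closedBall_subset_compact (𝕜₁ := ℂ) (f := (F : H →ₗ[ℂ] H)) hF 1
  obtain ⟨t, htf, htcover⟩ := Metric.totallyBounded_iff.mp hKc.totallyBounded (ε/3) (by positivity)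
  have hev : ∀ᶠ m in atTop, ∀ y ∈ t, ‖y - Pproj b m y‖ < ε/3 :=
    (eventually_all_finite htf).2 fun y _ =>
      (tendsto_norm_sub_Pproj b y).eventually_lt_const (by positivity)
  obtain ⟨N, hN⟩ := eventually_atTop.mp hev
  refine ⟨N, fun m hm => ?_⟩
  have key : ∀ x : H, ‖x‖ ≤ 1 → ‖F x - Pproj b m (F x)‖ ≤ 2*(ε/3) := by
    intro x hx
    have hFx : F x ∈ K := hKim ⟨x, by simpa [Metric.mem_closedBall] using hx, rfl⟩
    obtain ⟨y, hyt, hy⟩ := Set.mem_iUnion₂.mp (htcover hFx)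
    have hsplit : F x - Pproj b m (F x)
        = ((F x - y) - Pproj b m (F x - y)) + (y - Pproj b m y) := by
      simp only [map_sub]; abel
    calc ‖F x - Pproj b m (F x)‖
        ≤ ‖(F x - y) - Pproj b m (F x - y)‖ + ‖y - Pproj b m y‖ := by
          rw [hsplit]; exact norm_add_le _ _
      _ ≤ ‖F x - y‖ + ε/3 := by
          gcongr
          · exact norm_sub_projCLM_le_self _ _ _
          · exact (hN m hm y hyt).le
      _ ≤ ε/3 + ε/3 := by
          gcongr
          have := Metric.mem_ball.mp hy
          rw [dist_eq_norm] at this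
          exact this.le
      _ = 2*(ε/3) := by ring
  have hb : ‖F - Pproj b m ∘L F‖ ≤ 2*(ε/3) := by
    refine ContinuousLinearMap.opNorm_le_bound _ (by positivity) fun x => ?_
    by_cases hx : x = 0
    · simp [hx]
    · have hnx : (0:ℝ) < ‖x‖ := norm_pos_iff.mpr hx
      set c : ℂ := (‖x‖ : ℂ) with hc
      have hceq : x = c • ((c⁻¹ : ℂ) • x) := by
        have hc0 : c ≠ 0 := by
          simp only [hc, ne_eq, Complex.ofReal_eq_zero]
          exact hnx.ne'
        rw [smul_smul, mul_inv_cancel₀ hc0, one_smul]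
      have hy1 : ‖(c⁻¹ : ℂ) • x‖ ≤ 1 := by
        rw [norm_smul, norm_inv]
        simp only [hc, Complex.norm_real, Real.norm_eq_abs, abs_of_pos hnx]
        rw [inv_mul_cancel₀ hnx.ne']
      have := key ((c⁻¹ : ℂ) • x) hy1
      calc ‖(F - Pproj b m ∘L F) x‖
          = ‖c • ((F - Pproj b m ∘L F) ((c⁻¹:ℂ) • x))‖ := by
            conv_lhs => rw [hceq]
            rw [map_smul]
        _ = ‖x‖ * ‖(F - Pproj b m ∘L F) ((c⁻¹:ℂ) • x)‖ := by
            rw [norm_smul]; congr 1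
            simp [hc, abs_of_pos hnx]
        _ ≤ ‖x‖ * (2*(ε/3)) := by
            gcongr
            simpa [smul_sub] using this
        _ = 2*(ε/3) * ‖x‖ := by ring
  have : dist ‖F - Pproj b m ∘L F‖ 0 = ‖F - Pproj b m ∘L F‖ := by
    rw [Real.dist_eq, sub_zero, abs_of_nonneg (norm_nonneg _)]
  rw [this]
  calc ‖F - Pproj b m ∘L F‖ ≤ 2*(ε/3) := hb
    _ < ε := by linarith

-- algebra helpers for Tpow/Spow
theorem Tpow_eq (W : H ≃L[ℂ] H) (U : H →L[ℂ] H) (n : ℕ) (A : H →L[ℂ] H) :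
    Tpow W U n A = ((W : H →L[ℂ] H) ^ n) * A * (U ^ n) := by
  ext x; rfl

theorem Spow_eq (W : H ≃L[ℂ] H) (U : H →L[ℂ] H) (n : ℕ) (A : H →L[ℂ] H) :
    Spow W U n A = ((W.symm : H →L[ℂ] H) ^ n) * A * ((star U) ^ n) := by
  ext x; rfl

theorem sandwich_cancel {a a' c c' B : H →L[ℂ] H} (ha : a' * a = 1) (hc : c * c' = 1) :
    a' * (a * B * c) * c' = B := by
  calc a' * (a * B * c) * c' = (a' * a) * B * (c * c') := by simp only [mul_assoc]
    _ = B := by rw [ha, hc, one_mul, mul_one]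

theorem Tpow_add (W : H ≃L[ℂ] H) (U : H →L[ℂ] H) (n : ℕ) (A B : H →L[ℂ] H) :
    Tpow W U n (A + B) = Tpow W U n A + Tpow W U n B := by
  simp only [Tpow_eq, mul_add, add_mul]

theorem Spow_add (W : H ≃L[ℂ] H) (U : H →L[ℂ] H) (n : ℕ) (A B : H →L[ℂ] H) :
    Spow W U n (A + B) = Spow W U n A + Spow W U n B := by
  simp only [Spow_eq, mul_add, add_mul]

theorem Tpow_smul (W : H ≃L[ℂ] H) (U : H →L[ℂ] H) (n : ℕ) (c : ℂ) (A : H →L[ℂ] H) :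
    Tpow W U n (c • A) = c • Tpow W U n A := by
  simp only [Tpow_eq, mul_smul_comm, smul_mul_assoc]

theorem Spow_smul (W : H ≃L[ℂ] H) (U : H →L[ℂ] H) (n : ℕ) (c : ℂ) (A : H →L[ℂ] H) :
    Spow W U n (c • A) = c • Spow W U n A := by
  simp only [Spow_eq, mul_smul_comm, smul_mul_assoc]

theorem Tpow_Tpow (W : H ≃L[ℂ] H) (U : H →L[ℂ] H) (n : ℕ) (A : H →L[ℂ] H) :
    Tpow W U n (Tpow W U n A) = Tpow W U (2*n) A := by
  simp only [Tpow_eq, two_mul, pow_add]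
  noncomm_ring

theorem Spow_Spow (W : H ≃L[ℂ] H) (U : H →L[ℂ] H) (n : ℕ) (A : H →L[ℂ] H) :
    Spow W U n (Spow W U n A) = Spow W U (2*n) A := by
  simp only [Spow_eq, two_mul, pow_add]
  noncomm_ring

theorem Spow_Tpow' {U : H →L[ℂ] H} (W : H ≃L[ℂ] H) (hU : U ∈ unitary (H →L[ℂ] H)) (n : ℕ)
    (A : H →L[ℂ] H) : Spow W U n (Tpow W U n A) = A := by
  rw [Tpow_eq, Spow_eq]
  exact sandwich_cancel (symm_pow_mul_pow W n) (pow_mul_star_pow hU n)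

theorem Tpow_Spow' {U : H →L[ℂ] H} (W : H ≃L[ℂ] H) (hU : U ∈ unitary (H →L[ℂ] H)) (n : ℕ)
    (A : H →L[ℂ] H) : Tpow W U n (Spow W U n A) = A := by
  rw [Tpow_eq, Spow_eq]
  exact sandwich_cancel (pow_mul_symm_pow W n) (star_pow_mul_pow hU n)

/-- norm bound `‖A (Q G) U'‖ ≤ ‖A P‖ ‖G‖` when `P Q = Q`, `‖Q‖ ≤ 1`, `‖U'‖ ≤ 1`. -/
theorem norm_sandwich_le {A P Q G U' : H →L[ℂ] H} (hPQ : P ∘L Q = Q) (hQ1 : ‖Q‖ ≤ 1)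
    (hU1 : ‖U'‖ ≤ 1) : ‖A * (Q ∘L G) * U'‖ ≤ ‖A ∘L P‖ * ‖G‖ := by
  have hPQ' : ∀ z, P (Q z) = Q z := fun z => by
    rw [← ContinuousLinearMap.comp_apply, hPQ]
  have heq : A * (Q ∘L G) * U' = ((A ∘L P) ∘L Q) ∘L (G ∘L U') := by
    ext x
    simp [ContinuousLinearMap.mul_apply, hPQ']
  calc ‖A * (Q ∘L G) * U'‖ = ‖((A ∘L P) ∘L Q) ∘L (G ∘L U')‖ := by rw [heq]
    _ ≤ ‖(A ∘L P) ∘L Q‖ * ‖G ∘L U'‖ := ContinuousLinearMap.opNorm_comp_le _ _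
    _ ≤ (‖A ∘L P‖ * ‖Q‖) * (‖G‖ * ‖U'‖) := by
        gcongr <;> exact ContinuousLinearMap.opNorm_comp_le _ _
    _ ≤ (‖A ∘L P‖ * 1) * (‖G‖ * 1) := by gcongr <;> positivity
    _ = ‖A ∘L P‖ * ‖G‖ := by ring

end AuxLemmas


/-- sufficient condition for topological transitivity of the cosine
operator functions `C^{(n)}` on `B₀(H)`. -/
theorem stmt15 (b : HilbertBasis ℕ ℂ H) (W : H ≃L[ℂ] H) (U : H →L[ℂ] H)
    (hU : U ∈ unitary (H →L[ℂ] H))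
    (hyp : ∀ m : ℕ, ∃ (n : ℕ → ℕ) (E R : ℕ → Submodule ℂ H)
      (hE : ∀ k, FiniteDimensional ℂ (E k)) (hR : ∀ k, FiniteDimensional ℂ (R k)),
      StrictMono n ∧
      (∀ k, E k ⊔ R k = Lspan b m ∧ E k ⊓ R k = ⊥ ∧
        ∀ x ∈ E k, ∀ y ∈ R k, ⟪x, y⟫_ℂ = 0) ∧
      Filter.Tendsto (fun k => ‖((W : H →L[ℂ] H) ^ n k) ∘L Pproj b m‖) atTop (nhds 0) ∧
      Filter.Tendsto (fun k => ‖((W.symm : H →L[ℂ] H) ^ n k) ∘L Pproj b m‖) atTop (nhds 0) ∧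
      Filter.Tendsto (fun k => ‖((W : H →L[ℂ] H) ^ (2 * n k)) ∘L projCLM (E k) (hE k)‖)
        atTop (nhds 0) ∧
      Filter.Tendsto (fun k => ‖((W.symm : H →L[ℂ] H) ^ (2 * n k)) ∘L projCLM (R k) (hR k)‖)
        atTop (nhds 0)) :
    ∀ O₁ O₂ : Set ↥(B0 (H := H)), IsOpen O₁ → IsOpen O₂ → O₁.Nonempty → O₂.Nonempty →
      ∃ n : ℕ, 0 < n ∧ ∃ F ∈ O₁, CB0 W U n F ∈ O₂ := by
  intro O₁ O₂ hO₁ hO₂ hne₁ hne₂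
  obtain ⟨F₀, hF₀⟩ := hne₁
  obtain ⟨G₀, hG₀⟩ := hne₂
  obtain ⟨ε₁, hε₁, hball₁⟩ := Metric.isOpen_iff.mp hO₁ F₀ hF₀
  obtain ⟨ε₂, hε₂, hball₂⟩ := Metric.isOpen_iff.mp hO₂ G₀ hG₀
  set F : H →L[ℂ] H := F₀.1 with hFdef
  set G : H →L[ℂ] H := G₀.1 with hGdef
  have hF : IsCompactOperator F := F₀.2
  have hG : IsCompactOperator G := G₀.2
  -- choose m
  obtain ⟨m, hmF, hmG⟩ :=
    (((tendsto_comp_Pproj b F hF).eventually_lt_const (half_pos hε₁)).and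
      ((tendsto_comp_Pproj b G hG).eventually_lt_const (half_pos hε₂))).exists
  -- apply the hypothesis at m
  obtain ⟨n, E, R, hE, hR, hmono, hdecomp, haT, hbT, hcT, hdT⟩ := hyp m
  -- constants
  set M : ℝ := max ‖F‖ ‖G‖ + 1 with hMdef
  have hM : 0 < M := by positivity
  have hFM : ‖F‖ ≤ M := by
    have := le_max_left ‖F‖ ‖G‖; simp only [hMdef]; linarith
  have hGM : ‖G‖ ≤ M := by
    have := le_max_right ‖F‖ ‖G‖; simp only [hMdef]; linarith
  set δ : ℝ := min ε₁ ε₂ / (8 * M) with hδdef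
  have hδ : 0 < δ := by
    have : 0 < min ε₁ ε₂ := lt_min hε₁ hε₂
    positivity
  -- choose k
  obtain ⟨N, hN⟩ := eventually_atTop.mp
    (((haT.eventually_lt_const hδ).and (hbT.eventually_lt_const hδ)).and
      ((hcT.eventually_lt_const hδ).and (hdT.eventually_lt_const hδ)))
  set k : ℕ := max N 1 with hkdef
  obtain ⟨⟨hak, hbk⟩, hck, hdk⟩ := hN k (le_max_left _ _)
  set j : ℕ := n k with hjdef
  have hj : 0 < j := by
    have h1 : k ≤ n k := hmono.le_apply
    have h2 : 1 ≤ k := le_max_right _ _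
    omega
  obtain ⟨hsup, hinf, horth⟩ := hdecomp k
  -- projections
  set Pm : H →L[ℂ] H := Pproj b m with hPmdef
  set PE : H →L[ℂ] H := projCLM (E k) (hE k) with hPEdef
  set PR : H →L[ℂ] H := projCLM (R k) (hR k) with hPRdef
  have hEL : E k ≤ Lspan b m := hsup ▸ le_sup_left
  have hRL : R k ≤ Lspan b m := hsup ▸ le_sup_right
  have hPmPE : Pm ∘L PE = PE := projCLM_comp_projCLM (hE k) (Lspan_fd b m) hEL
  have hPmPR : Pm ∘L PR = PR := projCLM_comp_projCLM (hR k) (Lspan_fd b m) hRL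
  have hPEPE : PE ∘L PE = PE := projCLM_comp_projCLM (hE k) (hE k) le_rfl
  have hPRPR : PR ∘L PR = PR := projCLM_comp_projCLM (hR k) (hR k) le_rfl
  have hPmPm : Pm ∘L Pm = Pm := projCLM_comp_projCLM (Lspan_fd b m) (Lspan_fd b m) le_rfl
  have hadd : PE + PR = Pm := projCLM_add_projCLM (hE k) (hR k) (Lspan_fd b m) hsup horth
  have hPE1 : ‖PE‖ ≤ 1 := norm_projCLM_le _ _
  have hPR1 : ‖PR‖ ≤ 1 := norm_projCLM_le _ _
  have hPm1 : ‖Pm‖ ≤ 1 := norm_projCLM_le _ _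
  -- the transit operator
  set V : H →L[ℂ] H :=
    Pm ∘L F + (2:ℂ) • Tpow W U j (PE ∘L G) + (2:ℂ) • Spow W U j (PR ∘L G) with hVdef
  have hVmem : V ∈ B0 (H := H) := by
    refine Submodule.add_mem _ (Submodule.add_mem _ ?_ ?_) ?_
    · exact hF.clm_comp Pm
    · exact Submodule.smul_mem _ _ (Tpow_mem W U j _ (hG.clm_comp PE))
    · exact Submodule.smul_mem _ _ (Spow_mem W U j _ (hG.clm_comp PR))
  -- norm bounds on the pieces
  have hTEG : ‖Tpow W U j (PE ∘L G)‖ ≤ ‖((W : H →L[ℂ] H) ^ j) ∘L Pm‖ * ‖G‖ := by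
    rw [Tpow_eq]
    exact norm_sandwich_le hPmPE hPE1 (norm_unitary_pow_le hU j)
  have hSRG : ‖Spow W U j (PR ∘L G)‖ ≤ ‖((W.symm : H →L[ℂ] H) ^ j) ∘L Pm‖ * ‖G‖ := by
    rw [Spow_eq]
    exact norm_sandwich_le hPmPR hPR1 (norm_star_pow_le hU j)
  have hTPmF : ‖Tpow W U j (Pm ∘L F)‖ ≤ ‖((W : H →L[ℂ] H) ^ j) ∘L Pm‖ * ‖F‖ := by
    rw [Tpow_eq]
    exact norm_sandwich_le hPmPm hPm1 (norm_unitary_pow_le hU j)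
  have hSPmF : ‖Spow W U j (Pm ∘L F)‖ ≤ ‖((W.symm : H →L[ℂ] H) ^ j) ∘L Pm‖ * ‖F‖ := by
    rw [Spow_eq]
    exact norm_sandwich_le hPmPm hPm1 (norm_star_pow_le hU j)
  have hT2 : ‖Tpow W U (2*j) (PE ∘L G)‖
      ≤ ‖((W : H →L[ℂ] H) ^ (2*j)) ∘L PE‖ * ‖G‖ := by
    rw [Tpow_eq]
    exact norm_sandwich_le hPEPE hPE1 (norm_unitary_pow_le hU (2*j))
  have hS2 : ‖Spow W U (2*j) (PR ∘L G)‖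
      ≤ ‖((W.symm : H →L[ℂ] H) ^ (2*j)) ∘L PR‖ * ‖G‖ := by
    rw [Spow_eq]
    exact norm_sandwich_le hPRPR hPR1 (norm_star_pow_le hU (2*j))
  -- numeric bounds
  have hδM : δ * M = min ε₁ ε₂ / 8 := by
    rw [hδdef]; field_simp
  have haM : ‖((W : H →L[ℂ] H) ^ j) ∘L Pm‖ * M < δ * M :=
    mul_lt_mul_of_pos_right hak hM
  have hbM : ‖((W.symm : H →L[ℂ] H) ^ j) ∘L Pm‖ * M < δ * M :=
    mul_lt_mul_of_pos_right hbk hM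
  have hcM : ‖((W : H →L[ℂ] H) ^ (2*j)) ∘L PE‖ * M < δ * M :=
    mul_lt_mul_of_pos_right hck hM
  have hdM : ‖((W.symm : H →L[ℂ] H) ^ (2*j)) ∘L PR‖ * M < δ * M :=
    mul_lt_mul_of_pos_right hdk hM
  have hann : (0:ℝ) ≤ ‖((W : H →L[ℂ] H) ^ j) ∘L Pm‖ := norm_nonneg _
  have hbnn : (0:ℝ) ≤ ‖((W.symm : H →L[ℂ] H) ^ j) ∘L Pm‖ := norm_nonneg _
  -- V is close to F
  have hVF : ‖V - F‖ < ε₁ := by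
    have h1 : V - F = (Pm ∘L F - F) + ((2:ℂ) • Tpow W U j (PE ∘L G)
        + (2:ℂ) • Spow W U j (PR ∘L G)) := by rw [hVdef]; abel
    have h2 : ‖V - F‖ ≤ ‖Pm ∘L F - F‖ + (2 * ‖Tpow W U j (PE ∘L G)‖
        + 2 * ‖Spow W U j (PR ∘L G)‖) := by
      rw [h1]
      refine (norm_add_le _ _).trans ?_
      gcongr
      refine (norm_add_le _ _).trans ?_
      simp only [norm_smul]
      norm_num
    have h3 : ‖Pm ∘L F - F‖ < ε₁ / 2 := by rw [norm_sub_rev]; exact hmF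
    have h4 : 2 * ‖Tpow W U j (PE ∘L G)‖ ≤ 2 * (‖((W : H →L[ℂ] H) ^ j) ∘L Pm‖ * ‖G‖) := by
      gcongr
    have h5 : 2 * ‖Spow W U j (PR ∘L G)‖
        ≤ 2 * (‖((W.symm : H →L[ℂ] H) ^ j) ∘L Pm‖ * ‖G‖) := by gcongr
    have h6 : ‖((W : H →L[ℂ] H) ^ j) ∘L Pm‖ * ‖G‖ < δ * M :=
      lt_of_le_of_lt (by gcongr) haM
    have h7 : ‖((W.symm : H →L[ℂ] H) ^ j) ∘L Pm‖ * ‖G‖ < δ * M :=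
      lt_of_le_of_lt (by gcongr) hbM
    have h8 : min ε₁ ε₂ ≤ ε₁ := min_le_left _ _
    rw [hδM] at h6 h7
    linarith
  -- the key algebraic identity
  have hCV : Cpow W U j V = (2:ℂ)⁻¹ • Tpow W U j (Pm ∘L F)
      + (2:ℂ)⁻¹ • Spow W U j (Pm ∘L F)
      + Tpow W U (2*j) (PE ∘L G) + Spow W U (2*j) (PR ∘L G) + Pm ∘L G := by
    have hTV : Tpow W U j V = Tpow W U j (Pm ∘L F)
        + (2:ℂ) • Tpow W U (2*j) (PE ∘L G) + (2:ℂ) • (PR ∘L G) := by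
      rw [hVdef, Tpow_add, Tpow_add, Tpow_smul, Tpow_smul, Tpow_Tpow, Tpow_Spow' W hU]
    have hSV : Spow W U j V = Spow W U j (Pm ∘L F)
        + (2:ℂ) • (PE ∘L G) + (2:ℂ) • Spow W U (2*j) (PR ∘L G) := by
      rw [hVdef, Spow_add, Spow_add, Spow_smul, Spow_smul, Spow_Spow, Spow_Tpow' W hU]
    have hhalf : ∀ X : H →L[ℂ] H, (2:ℂ)⁻¹ • ((2:ℂ) • X) = X := fun X => by
      rw [smul_smul, inv_mul_cancel₀ two_ne_zero, one_smul]
    have hPmG : PE ∘L G + PR ∘L G = Pm ∘L G := by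
      rw [← ContinuousLinearMap.add_comp, hadd]
    rw [Cpow, hTV, hSV]
    rw [smul_add, smul_add, smul_add, smul_add, smul_add]
    rw [hhalf, hhalf, hhalf, hhalf]
    rw [← hPmG]
    abel
  -- C^j V is close to G
  have hCVG : ‖Cpow W U j V - G‖ < ε₂ := by
    have h1 : Cpow W U j V - G = ((2:ℂ)⁻¹ • Tpow W U j (Pm ∘L F)
        + (2:ℂ)⁻¹ • Spow W U j (Pm ∘L F)
        + Tpow W U (2*j) (PE ∘L G) + Spow W U (2*j) (PR ∘L G)) + (Pm ∘L G - G) := by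
      rw [hCV]; abel
    have h2 : ‖Cpow W U j V - G‖ ≤ ‖Tpow W U j (Pm ∘L F)‖ + ‖Spow W U j (Pm ∘L F)‖
        + ‖Tpow W U (2*j) (PE ∘L G)‖ + ‖Spow W U (2*j) (PR ∘L G)‖ + ‖Pm ∘L G - G‖ := by
      rw [h1]
      refine (norm_add_le _ _).trans ?_
      gcongr ?_ + _
      refine (norm_add_le _ _).trans ?_
      gcongr ?_ + _
      refine (norm_add_le _ _).trans ?_
      gcongr ?_ + _
      refine (norm_add_le _ _).trans ?_
      have e1 : ‖(2:ℂ)⁻¹ • Tpow W U j (Pm ∘L F)‖ ≤ ‖Tpow W U j (Pm ∘L F)‖ := by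
        rw [norm_smul]
        have h2n : ‖(2:ℂ)⁻¹‖ = 1/2 := by norm_num
        rw [h2n]
        linarith [norm_nonneg (Tpow W U j (Pm ∘L F))]
      have e2 : ‖(2:ℂ)⁻¹ • Spow W U j (Pm ∘L F)‖ ≤ ‖Spow W U j (Pm ∘L F)‖ := by
        rw [norm_smul]
        have h2n : ‖(2:ℂ)⁻¹‖ = 1/2 := by norm_num
        rw [h2n]
        linarith [norm_nonneg (Spow W U j (Pm ∘L F))]
      gcongr
    have b1 : ‖Tpow W U j (Pm ∘L F)‖ < δ * M :=
      lt_of_le_of_lt (hTPmF.trans (by gcongr)) haM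
    have b2 : ‖Spow W U j (Pm ∘L F)‖ < δ * M :=
      lt_of_le_of_lt (hSPmF.trans (by gcongr)) hbM
    have b3 : ‖Tpow W U (2*j) (PE ∘L G)‖ < δ * M :=
      lt_of_le_of_lt (hT2.trans (by gcongr)) hcM
    have b4 : ‖Spow W U (2*j) (PR ∘L G)‖ < δ * M :=
      lt_of_le_of_lt (hS2.trans (by gcongr)) hdM
    have b5 : ‖Pm ∘L G - G‖ < ε₂ / 2 := by rw [norm_sub_rev]; exact hmG
    have h8 : min ε₁ ε₂ ≤ ε₂ := min_le_right _ _
    rw [hδM] at b1 b2 b3 b4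
    linarith
  -- conclude
  refine ⟨j, hj, ⟨V, hVmem⟩, ?_, ?_⟩
  · apply hball₁
    rw [Metric.mem_ball, Subtype.dist_eq, dist_eq_norm]
    exact hVF
  · apply hball₂
    rw [Metric.mem_ball, Subtype.dist_eq, dist_eq_norm]
    exact hCVG


end
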